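/- For each n-restricted set partition ξ of {1,...,n+k} with parts B_1,...,B_n (where i ∈ B_i for 1 ≤ i ≤ n) and C_{n+1},...,C_{n+t}, the assignment sending ξ to the pair consisting of (a) the function assigning to each j ∈ {1,...,k} the index l ∈ {0,1,...,n} where l is the unique index with j+n ∈ B_l if such exists and l=0 otherwise, and (b) the set partition {C - n : C ∈ {C_{n+1},...,C_{n+t}}} of the remaining elements, is a bijection onto the set of pairs (f, D) where f: {1,...,k} → {0,1,...,n} and D is a set partition of f^{-1}(0). -/
import Mathlib


/-- A set partition `P` of `{1,…,n+k}` is `n`-restricted if the first `n`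
elements lie in pairwise distinct parts. -/
def Restricted (n k : ℕ) (P : Setoid (Fin (n + k))) : Prop :=
  ∀ a b : Fin n, P.r (Fin.castAdd k a) (Fin.castAdd k b) → a = b

open Classical in
/-- The map sending an `n`-restricted set partition `ξ` of `{1,…,n+k}` to the
pair consisting of (a) the function `f : {1,…,k} → {0,1,…,n}` assigning to
`j` the unique `l ≥ 1` such that `j+n` lies in the part of `l`, if such
exists, and `0` otherwise; and (b) the set partition of `f⁻¹(0)` induced by
`ξ` on the remaining elements (shifted down by `n`). -/
noncomputable def Phi (n k : ℕ) (P : {P : Setoid (Fin (n + k)) // Restricted n k P}) :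
    Σ f : Fin k → Fin (n + 1), Setoid {j : Fin k // f j = 0} :=
  ⟨fun j =>
    if h : ∃ l : Fin n, P.1.r (Fin.natAdd n j) (Fin.castAdd k l) then
      ⟨h.choose.val + 1, Nat.succ_lt_succ h.choose.isLt⟩
    else 0,
   Setoid.comap (fun j => Fin.natAdd n j.1) P.1⟩

namespace PhiProof
open Classical


variable {n k : ℕ}

noncomputable def gmap (f : Fin k → Fin (n + 1)) (D : Setoid {j : Fin k // f j = 0}) :
    Fin (n + k) → Fin n ⊕ Quotient D :=
  Fin.addCases (fun i => Sum.inl i)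
    (fun j => if h : f j = 0 then Sum.inr (Quotient.mk D ⟨j, h⟩) else Sum.inl ((f j).pred h))

@[simp] theorem gmap_castAdd (f : Fin k → Fin (n + 1)) (D : Setoid {j : Fin k // f j = 0})
    (i : Fin n) : gmap f D (Fin.castAdd k i) = Sum.inl i := by
  simp [gmap]

theorem gmap_natAdd (f : Fin k → Fin (n + 1)) (D : Setoid {j : Fin k // f j = 0})
    (j : Fin k) : gmap f D (Fin.natAdd n j) =
      if h : f j = 0 then Sum.inr (Quotient.mk D ⟨j, h⟩) else Sum.inl ((f j).pred h) := by
  simp [gmap]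

noncomputable def Psi (fD : Σ f : Fin k → Fin (n + 1), Setoid {j : Fin k // f j = 0}) :
    {P : Setoid (Fin (n + k)) // Restricted n k P} :=
  ⟨Setoid.ker (gmap fD.1 fD.2), by
    intro a b hab
    have h : gmap fD.1 fD.2 (Fin.castAdd k a) = gmap fD.1 fD.2 (Fin.castAdd k b) := hab
    simp only [gmap_castAdd] at h
    exact Sum.inl.inj h⟩

theorem phi_fst_pos (P : {P : Setoid (Fin (n + k)) // Restricted n k P}) (j : Fin k)
    (hex : ∃ l : Fin n, P.1.r (Fin.natAdd n j) (Fin.castAdd k l)) :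
    (Phi n k P).1 j = ⟨hex.choose.val + 1, Nat.succ_lt_succ hex.choose.isLt⟩ := by
  simp only [Phi]
  exact dif_pos hex

theorem phi_fst_neg (P : {P : Setoid (Fin (n + k)) // Restricted n k P}) (j : Fin k)
    (hnex : ¬∃ l : Fin n, P.1.r (Fin.natAdd n j) (Fin.castAdd k l)) :
    (Phi n k P).1 j = 0 := by
  simp only [Phi]
  exact dif_neg hnex

theorem phi_fst_ne_zero (P : {P : Setoid (Fin (n + k)) // Restricted n k P}) (j : Fin k)
    (hex : ∃ l : Fin n, P.1.r (Fin.natAdd n j) (Fin.castAdd k l)) :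
    (Phi n k P).1 j ≠ 0 := by
  rw [phi_fst_pos P j hex]
  intro h
  exact Nat.succ_ne_zero _ (congrArg Fin.val h)

theorem phi_exists_of_ne_zero (P : {P : Setoid (Fin (n + k)) // Restricted n k P}) (j : Fin k)
    (hz : (Phi n k P).1 j ≠ 0) :
    ∃ l : Fin n, P.1.r (Fin.natAdd n j) (Fin.castAdd k l) := by
  by_contra hnex
  exact hz (phi_fst_neg P j hnex)

theorem gmap_phi_natAdd_pos (P : {P : Setoid (Fin (n + k)) // Restricted n k P}) (j : Fin k)
    (hex : ∃ l : Fin n, P.1.r (Fin.natAdd n j) (Fin.castAdd k l)) :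
    gmap (Phi n k P).1 (Phi n k P).2 (Fin.natAdd n j) = Sum.inl hex.choose := by
  rw [gmap_natAdd, dif_neg (phi_fst_ne_zero P j hex)]
  congr 1
  ext
  simp [phi_fst_pos P j hex]

theorem gmap_phi_natAdd_neg (P : {P : Setoid (Fin (n + k)) // Restricted n k P}) (j : Fin k)
    (hz : (Phi n k P).1 j = 0) :
    gmap (Phi n k P).1 (Phi n k P).2 (Fin.natAdd n j)
      = Sum.inr (Quotient.mk (Phi n k P).2 ⟨j, hz⟩) := by
  rw [gmap_natAdd, dif_pos hz]

theorem gmap_phi_eq_iff (P : {P : Setoid (Fin (n + k)) // Restricted n k P})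
    (x y : Fin (n + k)) :
    gmap (Phi n k P).1 (Phi n k P).2 x = gmap (Phi n k P).1 (Phi n k P).2 y ↔ P.1.r x y := by
  induction x using Fin.addCases with
  | left i =>
    induction y using Fin.addCases with
    | left i' =>
      simp only [gmap_castAdd]
      constructor
      · intro h; obtain rfl := Sum.inl.inj h; exact P.1.refl' _
      · intro h; exact congrArg Sum.inl (P.2 i i' h)
    | right j =>
      by_cases hex : ∃ l : Fin n, P.1.r (Fin.natAdd n j) (Fin.castAdd k l)
      · rw [gmap_castAdd, gmap_phi_natAdd_pos P j hex]
        constructor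
        · intro h; obtain rfl := Sum.inl.inj h
          exact P.1.symm' hex.choose_spec
        · intro h
          exact congrArg Sum.inl
            (P.2 i hex.choose (P.1.trans' h hex.choose_spec))
      · rw [gmap_castAdd, gmap_phi_natAdd_neg P j (phi_fst_neg P j hex)]
        constructor
        · intro h; exact absurd h (by simp)
        · intro h; exact (hex ⟨i, P.1.symm' h⟩).elim
  | right j =>
    induction y using Fin.addCases with
    | left i =>
      by_cases hex : ∃ l : Fin n, P.1.r (Fin.natAdd n j) (Fin.castAdd k l)
      · rw [gmap_castAdd, gmap_phi_natAdd_pos P j hex]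
        constructor
        · intro h; obtain rfl := Sum.inl.inj h.symm
          exact hex.choose_spec
        · intro h
          exact congrArg Sum.inl (P.2 hex.choose i (P.1.trans' (P.1.symm' hex.choose_spec) h))
      · rw [gmap_castAdd, gmap_phi_natAdd_neg P j (phi_fst_neg P j hex)]
        constructor
        · intro h; exact absurd h (by simp)
        · intro h; exact (hex ⟨i, h⟩).elim
    | right j' =>
      by_cases hex : ∃ l : Fin n, P.1.r (Fin.natAdd n j) (Fin.castAdd k l) <;>
      by_cases hex' : ∃ l : Fin n, P.1.r (Fin.natAdd n j') (Fin.castAdd k l)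
      · rw [gmap_phi_natAdd_pos P j hex, gmap_phi_natAdd_pos P j' hex']
        constructor
        · intro h; obtain h := Sum.inl.inj h
          exact P.1.trans' hex.choose_spec (by rw [h]; exact P.1.symm' hex'.choose_spec)
        · intro h
          exact congrArg Sum.inl
            (P.2 _ _ (P.1.trans' (P.1.symm' hex.choose_spec) (P.1.trans' h hex'.choose_spec)))
      · rw [gmap_phi_natAdd_pos P j hex, gmap_phi_natAdd_neg P j' (phi_fst_neg P j' hex')]
        constructor
        · intro h; exact absurd h (by simp)
        · intro h
          exact (hex' ⟨hex.choose, P.1.trans' (P.1.symm' h) hex.choose_spec⟩).elim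
      · rw [gmap_phi_natAdd_pos P j' hex', gmap_phi_natAdd_neg P j (phi_fst_neg P j hex)]
        constructor
        · intro h; exact absurd h (by simp)
        · intro h
          exact (hex ⟨hex'.choose, P.1.trans' h hex'.choose_spec⟩).elim
      · rw [gmap_phi_natAdd_neg P j (phi_fst_neg P j hex),
            gmap_phi_natAdd_neg P j' (phi_fst_neg P j' hex')]
        constructor
        · intro h
          have h2 : Quotient.mk (Phi n k P).2 ⟨j, phi_fst_neg P j hex⟩
              = Quotient.mk (Phi n k P).2 ⟨j', phi_fst_neg P j' hex'⟩ := Sum.inr.inj h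
          have h3 := Quotient.exact h2
          exact h3
        · intro h
          exact congrArg Sum.inr (Quotient.sound h)

theorem psi_phi (P : {P : Setoid (Fin (n + k)) // Restricted n k P}) :
    Psi (Phi n k P) = P := by
  apply Subtype.ext
  apply Setoid.ext
  intro x y
  exact gmap_phi_eq_iff P x y

theorem heq_setoid {α : Type*} {p q : α → Prop} (hpq : ∀ x, p x = q x)
    (S : Setoid {x // p x}) (T : Setoid {x // q x})
    (H : ∀ (a b : α) (ha : p a) (hb : p b) (ha' : q a) (hb' : q b),
        S.r ⟨a, ha⟩ ⟨b, hb⟩ ↔ T.r ⟨a, ha'⟩ ⟨b, hb'⟩) : HEq S T := by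
  have hpq' : p = q := funext hpq
  subst hpq'
  refine heq_of_eq (Setoid.ext fun a b => ?_)
  obtain ⟨a, ha⟩ := a; obtain ⟨b, hb⟩ := b
  exact H a b ha hb ha hb

theorem phi_psi (fD : Σ f : Fin k → Fin (n + 1), Setoid {j : Fin k // f j = 0}) :
    Phi n k (Psi fD) = fD := by
  obtain ⟨f, D⟩ := fD
  have hf : ∀ j, (Phi n k (Psi ⟨f, D⟩)).1 j = f j := by
    intro j
    by_cases hj : f j = 0
    · rw [phi_fst_neg _ j ?_, hj]
      rintro ⟨l, hl⟩
      have h1 : gmap f D (Fin.natAdd n j) = gmap f D (Fin.castAdd k l) := hl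
      rw [gmap_natAdd, dif_pos hj, gmap_castAdd] at h1
      exact absurd h1 (by simp)
    · have hex : ∃ l : Fin n, (Psi ⟨f, D⟩).1.r (Fin.natAdd n j) (Fin.castAdd k l) :=
        ⟨(f j).pred hj, show gmap f D _ = gmap f D _ by
          rw [gmap_natAdd, dif_neg hj, gmap_castAdd]⟩
      rw [phi_fst_pos _ j hex]
      have hc : hex.choose = (f j).pred hj := by
        have hspec : gmap f D (Fin.natAdd n j) = gmap f D (Fin.castAdd k hex.choose) :=
          hex.choose_spec
        rw [gmap_natAdd, dif_neg hj, gmap_castAdd] at hspec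
        exact (Sum.inl.inj hspec).symm
      have hv : (f j).val ≠ 0 := fun h0 => hj (Fin.ext h0)
      ext
      rw [hc]
      simp only [Fin.coe_pred]
      omega
  refine Sigma.ext (funext hf) (heq_setoid (fun j => by rw [hf j]) _ _ ?_)
  intro a b ha hb ha' hb'
  show gmap f D (Fin.natAdd n a) = gmap f D (Fin.natAdd n b) ↔ D.r ⟨a, ha'⟩ ⟨b, hb'⟩
  rw [gmap_natAdd, gmap_natAdd, dif_pos ha', dif_pos hb']
  constructor
  · intro h
    have h2 : Quotient.mk D ⟨a, ha'⟩ = Quotient.mk D ⟨b, hb'⟩ := Sum.inr.inj h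
    have h3 := Quotient.exact h2
    exact h3
  · intro h
    exact congrArg Sum.inr (Quotient.sound h)

end PhiProof

/-- The assignment `ξ ↦ (f, D)` described above is a bijection from the set of
`n`-restricted set partitions of `{1,…,n+k}` onto the set of pairs `(f, D)`
with `f : {1,…,k} → {0,1,…,n}` and `D` a set partition of `f⁻¹(0)`. -/

theorem phi_bijective (n k : ℕ) : Function.Bijective (Phi n k) :=
  Function.bijective_iff_has_inverse.2
    ⟨PhiProof.Psi, PhiProof.psi_phi, PhiProof.phi_psi⟩
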